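/- arXiv:2509.12154 — 4 statements merged into one kernel-verified Lean document; each statement's English description precedes it below -/
import Mathlib

section
/- Let g: ℝ^k → ℝ be continuously differentiable with locally Lipschitz gradient, and suppose w* is a local minimum of g satisfying the Łojasiewicz inequality in a neighborhood of w*: there exist μ, γ > 0 and α ∈ (0,1) such that ‖∇g(w)‖ ≥ μ · (g(w) − g(w*))^α whenever ‖w − w*‖ ≤ γ. Then there exist μ₁ > 0 and γ₁ ∈ (0, γ) such that ‖∇g(w)‖ ≤ μ₁ · (g(w) − g(w*))^(1−α) whenever ‖w − w*‖ ≤ γ₁. -/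
open InnerProductSpace Set

local notation "⟪" x ", " y "⟫" => @inner ℝ _ _ x y

lemma descent_aux {k : ℕ} (g : EuclideanSpace ℝ (Fin k) → ℝ) (hg : ContDiff ℝ 1 g)
    (x v : EuclideanSpace ℝ (Fin k)) (C : ℝ)
    (hC : ∀ s ∈ Set.Icc (0:ℝ) 1, ‖gradient g (x + s • v) - gradient g x‖ ≤ C) :
    g (x + v) ≤ g x + ⟪gradient g x, v⟫ + C * ‖v‖ := by
  have hdiff := hg.differentiable one_ne_zero
  have hderiv : ∀ s : ℝ, HasDerivAt (fun t : ℝ => g (x + t • v))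
      ⟪gradient g (x + s • v), v⟫ s := by
    intro s
    have hline : HasDerivAt (fun t : ℝ => x + t • v) v s := by
      simpa using ((hasDerivAt_id s).smul_const v).const_add x
    have hf := (hdiff (x + s • v)).hasGradientAt.hasFDerivAt
    have h2 := hf.comp_hasDerivAt s hline
    simp only [InnerProductSpace.toDual_apply_apply] at h2
    exact h2
  obtain ⟨c, hc, heq⟩ := exists_hasDerivAt_eq_slope (fun t : ℝ => g (x + t • v))
      (fun s => ⟪gradient g (x + s • v), v⟫) zero_lt_one
      ((hg.continuous.comp (by fun_prop)).continuousOn) (fun s _ => hderiv s)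
  simp only [one_smul, zero_smul, add_zero, sub_zero, div_one] at heq
  have h1 : g (x + v) = g x + ⟪gradient g (x + c • v), v⟫ := by linarith [heq]
  have h2 : ⟪gradient g (x + c • v), v⟫
      = ⟪gradient g x, v⟫ + ⟪gradient g (x + c • v) - gradient g x, v⟫ := by
    rw [inner_sub_left]; ring
  have h3 : ⟪gradient g (x + c • v) - gradient g x, v⟫ ≤ C * ‖v‖ := by
    calc ⟪gradient g (x + c • v) - gradient g x, v⟫
        ≤ ‖gradient g (x + c • v) - gradient g x‖ * ‖v‖ := real_inner_le_norm _ _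
      _ ≤ C * ‖v‖ := by
          apply mul_le_mul_of_nonneg_right (hC c ⟨hc.1.le, hc.2.le⟩) (norm_nonneg _)
  linarith

/-- Reverse Łojasiewicz inequality: if `g` is `C¹` with locally Lipschitz gradient and
`w*` is a local minimum of `g` satisfying the Łojasiewicz inequality with exponent
`α ∈ (0,1)` on a ball of radius `γ`, then there exist `μ₁ > 0` and `γ₁ ∈ (0, γ)` such
that `‖∇g(w)‖ ≤ μ₁ (g(w) - g(w*))^(1-α)` on the ball of radius `γ₁`. -/
theorem reverse_lojasiewicz {k : ℕ}
    (g : EuclideanSpace ℝ (Fin k) → ℝ)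
    (hg : ContDiff ℝ 1 g)
    (hlip : LocallyLipschitz (gradient g))
    (wstar : EuclideanSpace ℝ (Fin k))
    (hmin : IsLocalMin g wstar)
    (μ γ α : ℝ) (hμ : 0 < μ) (hγ : 0 < γ) (hα : α ∈ Set.Ioo (0:ℝ) 1)
    (hloj : ∀ w : EuclideanSpace ℝ (Fin k), ‖w - wstar‖ ≤ γ →
      μ * (g w - g wstar) ^ α ≤ ‖gradient g w‖) :
    ∃ μ₁ : ℝ, 0 < μ₁ ∧ ∃ γ₁ ∈ Set.Ioo (0:ℝ) γ,
      ∀ w : EuclideanSpace ℝ (Fin k), ‖w - wstar‖ ≤ γ₁ →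
        ‖gradient g w‖ ≤ μ₁ * (g w - g wstar) ^ (1 - α) := by
  classical
  obtain ⟨K, t, ht, hK⟩ := hlip wstar
  obtain ⟨ε, hε, hball⟩ := Metric.mem_nhds_iff.mp ht
  obtain ⟨δ, hδ, hminball⟩ := Metric.eventually_nhds_iff_ball.mp hmin
  set L : ℝ := (K : ℝ) + 1 with hLdef
  have hL1 : (1:ℝ) ≤ L := le_add_of_nonneg_left K.coe_nonneg
  have hL0 : (0:ℝ) < L := by positivity
  -- Lipschitz estimate in real form
  have hLips : ∀ a ∈ t, ∀ b ∈ t, ‖gradient g a - gradient g b‖ ≤ L * ‖a - b‖ := by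
    intro a ha b hb
    have := (lipschitzOnWith_iff_dist_le_mul.mp hK) a ha b hb
    rw [dist_eq_norm, dist_eq_norm] at this
    calc ‖gradient g a - gradient g b‖ ≤ K * ‖a - b‖ := this
      _ ≤ L * ‖a - b‖ := by
          apply mul_le_mul_of_nonneg_right _ (norm_nonneg _)
          simp [hLdef]
  -- gradient zero at wstar
  have hgrad0 : gradient g wstar = 0 := by
    unfold gradient
    rw [hmin.fderiv_eq_zero, map_zero]
  set r0 : ℝ := min γ (min ε δ) with hr0def
  have hr0 : 0 < r0 := by
    simp only [hr0def, lt_min_iff]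
    exact ⟨hγ, hε, hδ⟩
  refine ⟨4 * L / μ, by positivity, r0 / 4, ⟨by positivity, ?_⟩, ?_⟩
  · calc r0 / 4 < r0 := by linarith
      _ ≤ γ := min_le_left _ _
  intro w hw
  set Δ : ℝ := g w - g wstar with hΔdef
  clear_value Δ
  have hr0ε : r0 ≤ ε := le_trans (min_le_right _ _) (min_le_left _ _)
  have hr0δ : r0 ≤ δ := le_trans (min_le_right _ _) (min_le_right _ _)
  have hwt : w ∈ t := by
    apply hball
    rw [Metric.mem_ball, dist_eq_norm]
    linarith
  have hwst : wstar ∈ t := by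
    apply hball
    simpa using hε
  -- gradient bound
  have hgb : ‖gradient g w‖ ≤ L * (r0 / 4) := by
    have := hLips w hwt wstar hwst
    rw [hgrad0, sub_zero] at this
    exact this.trans (mul_le_mul_of_nonneg_left hw hL0.le)
  -- the descent step
  set v : EuclideanSpace ℝ (Fin k) := -((1 / (2 * L)) • gradient g w) with hvdef
  have hnv : ‖v‖ = (1 / (2 * L)) * ‖gradient g w‖ := by
    rw [hvdef, norm_neg, norm_smul, Real.norm_eq_abs, abs_of_pos (by positivity)]
  have hnv' : ‖v‖ ≤ r0 / 8 := by
    rw [hnv]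
    calc (1 / (2 * L)) * ‖gradient g w‖ ≤ (1 / (2 * L)) * (L * (r0 / 4)) :=
          mul_le_mul_of_nonneg_left hgb (by positivity)
      _ = r0 / 8 := by field_simp; ring
  have hseg : ∀ s ∈ Set.Icc (0:ℝ) 1, ‖(w + s • v) - wstar‖ < r0 := by
    intro s hs
    calc ‖(w + s • v) - wstar‖ = ‖(w - wstar) + s • v‖ := by rw [add_sub_right_comm]
      _ ≤ ‖w - wstar‖ + ‖s • v‖ := norm_add_le _ _
      _ ≤ r0 / 4 + ‖v‖ := by
          refine add_le_add hw ?_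
          rw [norm_smul, Real.norm_eq_abs, abs_of_nonneg hs.1]
          exact mul_le_of_le_one_left (norm_nonneg _) hs.2
      _ ≤ r0 / 4 + r0 / 8 := by linarith
      _ < r0 := by linarith
  have hsegt : ∀ s ∈ Set.Icc (0:ℝ) 1, (w + s • v) ∈ t := by
    intro s hs
    apply hball
    rw [Metric.mem_ball, dist_eq_norm]
    exact lt_of_lt_of_le (hseg s hs) hr0ε
  have hC : ∀ s ∈ Set.Icc (0:ℝ) 1, ‖gradient g (w + s • v) - gradient g w‖ ≤ L * ‖v‖ := by
    intro s hs
    calc ‖gradient g (w + s • v) - gradient g w‖ ≤ L * ‖(w + s • v) - w‖ :=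
          hLips _ (hsegt s hs) w hwt
      _ = L * (|s| * ‖v‖) := by rw [add_sub_cancel_left, norm_smul, Real.norm_eq_abs]
      _ ≤ L * ‖v‖ := by
          apply mul_le_mul_of_nonneg_left _ hL0.le
          rw [abs_of_nonneg hs.1]
          exact mul_le_of_le_one_left (norm_nonneg _) hs.2
  have hdesc := descent_aux g hg w v (L * ‖v‖) hC
  have hinner : ⟪gradient g w, v⟫ = -(1 / (2 * L)) * ‖gradient g w‖ ^ 2 := by
    rw [hvdef, inner_neg_right, real_inner_smul_right, real_inner_self_eq_norm_sq]
    ring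
  have hmin' : g wstar ≤ g (w + v) := by
    apply hminball
    rw [Metric.mem_ball, dist_eq_norm]
    have := hseg 1 ⟨zero_le_one, le_rfl⟩
    rw [one_smul] at this
    exact lt_of_lt_of_le this hr0δ
  -- key: ‖∇g w‖² ≤ 4 L Δ
  have hkey : ‖gradient g w‖ ^ 2 ≤ 4 * L * Δ := by
    have hLv : L * ‖v‖ * ‖v‖ = (1 / (4 * L)) * ‖gradient g w‖ ^ 2 := by
      rw [hnv]; field_simp; ring
    rw [hinner, hLv] at hdesc
    have e : -(1 / (2 * L)) * ‖gradient g w‖ ^ 2 + (1 / (4 * L)) * ‖gradient g w‖ ^ 2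
        = -((1 / (4 * L)) * ‖gradient g w‖ ^ 2) := by field_simp; ring
    have h4 : (1 / (4 * L)) * ‖gradient g w‖ ^ 2 ≤ Δ := by
      rw [hΔdef]; linarith
    calc ‖gradient g w‖ ^ 2 = (4 * L) * ((1 / (4 * L)) * ‖gradient g w‖ ^ 2) := by
          field_simp
      _ ≤ (4 * L) * Δ := mul_le_mul_of_nonneg_left h4 (by positivity)
  have hΔ0 : 0 ≤ Δ := by
    have : g wstar ≤ g w := by
      apply hminball
      rw [Metric.mem_ball, dist_eq_norm]
      calc ‖w - wstar‖ ≤ r0 / 4 := hw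
        _ < r0 := by linarith
        _ ≤ δ := hr0δ
    rw [hΔdef]; linarith
  have hloj' := hloj w (le_trans hw (by calc r0/4 ≤ r0 := by linarith
                                        _ ≤ γ := min_le_left _ _))
  rw [← hΔdef] at hloj'
  rcases eq_or_lt_of_le hΔ0 with hΔ | hΔ
  · -- Δ = 0 : then gradient is 0
    have h0 : ‖gradient g w‖ ^ 2 ≤ 0 := by rw [← hΔ] at hkey; simpa using hkey
    have hN2 : ‖gradient g w‖ ^ 2 = 0 := le_antisymm h0 (sq_nonneg _)
    have hN : ‖gradient g w‖ = 0 := by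
      exact (pow_eq_zero_iff two_ne_zero).mp hN2
    rw [hN, ← hΔ, Real.zero_rpow (by intro h; linarith [hα.2] : (1:ℝ) - α ≠ 0)]
    simp
  · -- Δ > 0
    set N := ‖gradient g w‖ with hN
    clear_value N
    have hN0 : 0 ≤ N := by rw [hN]; exact norm_nonneg _
    have hsplit : Δ = Δ ^ (1 - α) * Δ ^ α := by
      rw [← Real.rpow_add hΔ, sub_add_cancel, Real.rpow_one]
    have hΔα : Δ ^ α ≤ N / μ := by
      rw [le_div_iff₀ hμ]
      linarith [hloj']
    have hpow : (0:ℝ) ≤ Δ ^ (1 - α) := Real.rpow_nonneg hΔ0 _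
    have h2 : N ^ 2 ≤ 4 * L * (Δ ^ (1 - α) * (N / μ)) := by
      calc N ^ 2 ≤ 4 * L * Δ := hkey
        _ = 4 * L * (Δ ^ (1 - α) * Δ ^ α) := by rw [← hsplit]
        _ ≤ 4 * L * (Δ ^ (1 - α) * (N / μ)) := by
            apply mul_le_mul_of_nonneg_left _ (by positivity)
            exact mul_le_mul_of_nonneg_left hΔα hpow
    rcases eq_or_lt_of_le hN0 with hN0' | hN0'
    · rw [← hN0']
      positivity
    · rw [← sub_nonneg] at h2 ⊢
      have hh : 4 * L * (Δ ^ (1 - α) * (N / μ)) - N ^ 2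
          = N * (4 * L / μ * Δ ^ (1 - α) - N) := by field_simp
      rw [hh] at h2
      exact nonneg_of_mul_nonneg_right h2 hN0'
end

section
/- Let g: ℝ^d → ℝ be continuously differentiable and L-positively homogeneous with L > 2, and let w(t) solve the gradient flow ẇ = ∇g(w) with ‖w(0)‖ = 1 and g(w(0)) > 0. Suppose g(w(t)/‖w(t)‖) is nondecreasing in t and ‖w(t)‖ is nondecreasing, and that the solution blows up at time T (i.e., lim_{t→T} ‖w(t)‖ = ∞) with lim_{t→T} g(w(t)/‖w(t)‖) = g* ∈ (0, ∞). Then the blowup time satisfies 1/(L(L−2)·g*) ≤ T ≤ 1/(L(L−2)·g(w(0))). -/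
open Filter

lemma euler_identity {d : ℕ} (L : ℝ) (g : EuclideanSpace ℝ (Fin d) → ℝ)
    (hg : ContDiff ℝ 1 g)
    (hhom : ∀ c : ℝ, 0 ≤ c → ∀ x : EuclideanSpace ℝ (Fin d),
      g (c • x) = c ^ L * g x)
    (x : EuclideanSpace ℝ (Fin d)) :
    fderiv ℝ g x x = L * g x := by
  have hdg : HasFDerivAt g (fderiv ℝ g x) x :=
    (hg.differentiable one_ne_zero x).hasFDerivAt
  have hs : HasDerivAt (fun c : ℝ => c • x) x 1 := by
    simpa using (hasDerivAt_id (1:ℝ)).smul_const x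
  have h1 : HasDerivAt (fun c : ℝ => g (c • x)) (fderiv ℝ g x x) 1 := by
    have hdg' : HasFDerivAt g (fderiv ℝ g x) ((1:ℝ) • x) := by simpa using hdg
    exact hdg'.comp_hasDerivAt (x := (1:ℝ)) hs
  have h2 : HasDerivAt (fun c : ℝ => c ^ L * g x) (L * g x) 1 := by
    have := (Real.hasDerivAt_rpow_const (p := L) (x := (1:ℝ))
      (Or.inl one_ne_zero)).mul_const (g x)
    simpa using this
  have heq : (fun c : ℝ => c ^ L * g x) =ᶠ[nhds 1] fun c : ℝ => g (c • x) := by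
    filter_upwards [Ioi_mem_nhds (by norm_num : (0:ℝ) < 1)] with c hc
    exact (hhom c (le_of_lt hc) x).symm
  exact h1.unique (h2.congr_of_eventuallyEq heq.symm)

/-- Blowup-time bounds for gradient flow of an `L`-homogeneous function with `L > 2`:
if `‖w(0)‖ = 1`, `g(w(0)) > 0`, the normalized value `g(w/‖w‖)` and the norm `‖w‖`
are nondecreasing, the solution blows up at time `T`, and `g(w/‖w‖) → g* > 0`,
then `1/(L(L-2) g*) ≤ T ≤ 1/(L(L-2) g(w(0)))`. -/
theorem blowup_time_bounds {d : ℕ} (L : ℝ) (hL : 2 < L)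
    (g : EuclideanSpace ℝ (Fin d) → ℝ) (hg : ContDiff ℝ 1 g)
    (hhom : ∀ c : ℝ, 0 ≤ c → ∀ x : EuclideanSpace ℝ (Fin d),
      g (c • x) = c ^ L * g x)
    (T : ℝ) (hT : 0 < T)
    (w : ℝ → EuclideanSpace ℝ (Fin d))
    (hflow : ∀ t ∈ Set.Ico (0:ℝ) T, HasDerivAt w (gradient g (w t)) t)
    (hnorm0 : ‖w 0‖ = 1) (hg0 : 0 < g (w 0))
    (hmono1 : MonotoneOn (fun t => g ((‖w t‖)⁻¹ • w t)) (Set.Ico (0:ℝ) T))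
    (hmono2 : MonotoneOn (fun t => ‖w t‖) (Set.Ico (0:ℝ) T))
    (hblow : Tendsto (fun t => ‖w t‖) (nhdsWithin T (Set.Iio T)) atTop)
    (gstar : ℝ) (hgstar : 0 < gstar)
    (hglim : Tendsto (fun t => g ((‖w t‖)⁻¹ • w t))
      (nhdsWithin T (Set.Iio T)) (nhds gstar)) :
    1 / (L * (L - 2) * gstar) ≤ T ∧ T ≤ 1 / (L * (L - 2) * g (w 0)) := by
  set I := Set.Ico (0:ℝ) T with hI
  have h0I : (0:ℝ) ∈ I := ⟨le_rfl, hT⟩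
  set A := L * (L - 2) with hAdef
  have hApos : 0 < A := mul_pos (by linarith) (by linarith)
  set h : ℝ → ℝ := fun t => g ((‖w t‖)⁻¹ • w t) with hh
  have hn : ∀ t ∈ I, 1 ≤ ‖w t‖ := fun t ht => by
    have := hmono2 h0I ht ht.1; simp only at this; rwa [hnorm0] at this
  have h00 : h 0 = g (w 0) := by rw [hh]; simp [hnorm0]
  have hlb : ∀ t ∈ I, g (w 0) ≤ h t := fun t ht => h00 ▸ hmono1 h0I ht ht.1
  have hub : ∀ t ∈ I, h t ≤ gstar := by
    intro t ht
    refine ge_of_tendsto hglim ?_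
    filter_upwards [Ioo_mem_nhdsLT_of_mem (Set.mem_Ioc.mpr ⟨ht.2, le_rfl⟩)] with s hs
    exact hmono1 ht ⟨ht.1.trans hs.1.le, hs.2⟩ hs.1.le
  have hgw : ∀ t ∈ I, g (w t) = ‖w t‖ ^ L * h t := by
    intro t ht
    have hnpos : (0:ℝ) < ‖w t‖ := lt_of_lt_of_le one_pos (hn t ht)
    have hwt : w t = ‖w t‖ • ((‖w t‖)⁻¹ • w t) := by
      rw [smul_smul, mul_inv_cancel₀ hnpos.ne', one_smul]
    calc g (w t) = g (‖w t‖ • ((‖w t‖)⁻¹ • w t)) := by rw [← hwt]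
    _ = ‖w t‖ ^ L * h t := hhom _ hnpos.le _
  have hinner : ∀ x : EuclideanSpace ℝ (Fin d),
      (inner ℝ (gradient g x) x : ℝ) = L * g x := by
    intro x
    rw [gradient, InnerProductSpace.toDual_symm_apply]
    exact euler_identity L g hg hhom x
  set N : ℝ → ℝ := fun t => (inner ℝ (w t) (w t) : ℝ) with hNdef
  have hNval : ∀ t, N t = ‖w t‖ ^ (2:ℕ) := fun t => real_inner_self_eq_norm_sq (w t)
  have hNderiv : ∀ t ∈ I, HasDerivAt N (2 * (L * g (w t))) t := by
    intro t ht
    have hw := hflow t ht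
    have := hw.inner (𝕜 := ℝ) hw
    have e0 : (inner ℝ (w t) (gradient g (w t)) : ℝ) = L * g (w t) := by
      rw [real_inner_comm]; exact hinner _
    have e : (inner ℝ (w t) (gradient g (w t)) : ℝ) + inner ℝ (gradient g (w t)) (w t)
        = 2 * (L * g (w t)) := by
      rw [e0, hinner]; ring
    rw [e] at this
    exact this
  set u : ℝ → ℝ := fun t => N t ^ ((2 - L) / 2) with hudef
  have huval : ∀ t, u t = ‖w t‖ ^ (2 - L) := by
    intro t
    rw [hudef]
    simp only
    rw [hNval t, ← Real.rpow_natCast ‖w t‖ 2, ← Real.rpow_mul (norm_nonneg _)]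
    congr 1; push_cast; ring
  have hu0 : u 0 = 1 := by rw [huval 0, hnorm0, Real.one_rpow]
  have hupos : ∀ t ∈ I, 0 < u t := by
    intro t ht
    rw [huval t]
    exact Real.rpow_pos_of_pos (lt_of_lt_of_le one_pos (hn t ht)) _
  have huderiv : ∀ t ∈ I, HasDerivAt u (-(A * h t)) t := by
    intro t ht
    have hnpos : (0:ℝ) < ‖w t‖ := lt_of_lt_of_le one_pos (hn t ht)
    have hNpos : 0 < N t := by rw [hNval t]; positivity
    have hd := (hNderiv t ht).rpow_const (p := (2 - L) / 2) (Or.inl hNpos.ne')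
    have e1 : N t ^ ((2 - L) / 2 - 1) = ‖w t‖ ^ (-L) := by
      rw [hNval t, ← Real.rpow_natCast ‖w t‖ 2, ← Real.rpow_mul (norm_nonneg _)]
      congr 1; push_cast; ring
    have e2 : ‖w t‖ ^ L * ‖w t‖ ^ (-L) = 1 := by
      rw [← Real.rpow_add hnpos]; simp
    have e3 : 2 * (L * g (w t)) * ((2 - L) / 2) * N t ^ ((2 - L) / 2 - 1)
        = -(A * h t) := by
      rw [e1, hgw t ht]
      have : 2 * (L * (‖w t‖ ^ L * h t)) * ((2 - L) / 2) * ‖w t‖ ^ (-L)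
          = (L * (2 - L) * h t) * (‖w t‖ ^ L * ‖w t‖ ^ (-L)) := by ring
      rw [this, e2, hAdef]; ring
    rw [e3] at hd
    exact hd
  have hphi : ∀ C : ℝ, ∀ t ∈ I, HasDerivAt (fun s => u s + C * s) (-(A * h t) + C) t := by
    intro C t ht
    exact (huderiv t ht).add (by simpa using (hasDerivAt_id t).const_mul C)
  have hcont : ∀ C : ℝ, ContinuousOn (fun s => u s + C * s) I :=
    fun C => fun t ht => (hphi C t ht).continuousAt.continuousWithinAt
  have hdiff : ∀ C : ℝ, DifferentiableOn ℝ (fun s => u s + C * s) (interior I) := by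
    intro C t ht
    rw [hI, interior_Ico] at ht
    exact (hphi C t (Set.Ioo_subset_Ico_self ht)).differentiableAt.differentiableWithinAt
  have hIconv : Convex ℝ I := convex_Ico 0 T
  constructor
  · -- lower bound: 1/(A gstar) ≤ T
    have hmon : MonotoneOn (fun s => u s + A * gstar * s) I := by
      apply monotoneOn_of_deriv_nonneg hIconv (hcont _) (hdiff _)
      intro x hx
      rw [hI, interior_Ico] at hx
      have hx' : x ∈ I := Set.Ioo_subset_Ico_self hx
      rw [(hphi _ x hx').deriv]
      have := hub x hx'
      nlinarith [hApos]
    have hkey : ∀ t ∈ I, 1 ≤ u t + A * gstar * t := by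
      intro t ht
      have := hmon h0I ht ht.1
      simpa [hu0] using this
    have hutend : Tendsto u (nhdsWithin T (Set.Iio T)) (nhds 0) := by
      have h1 : Tendsto (fun x : ℝ => x ^ (-(L - 2))) atTop (nhds 0) :=
        tendsto_rpow_neg_atTop (by linarith)
      refine (h1.comp hblow).congr fun t => ?_
      rw [Function.comp_apply, huval t]
      congr 1; ring
    have hltend : Tendsto (fun t => u t + A * gstar * t) (nhdsWithin T (Set.Iio T))
        (nhds (0 + A * gstar * T)) := by
      exact hutend.add (((continuous_const.mul continuous_id).tendsto T).mono_left
        nhdsWithin_le_nhds)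
    have hfin : 1 ≤ 0 + A * gstar * T := by
      refine ge_of_tendsto hltend ?_
      filter_upwards [Ioo_mem_nhdsLT_of_mem (Set.mem_Ioc.mpr ⟨hT, le_rfl⟩)] with s hs
      exact hkey s (Set.Ioo_subset_Ico_self hs)
    rw [div_le_iff₀ (mul_pos hApos hgstar)]
    linarith
  · -- upper bound
    have hanti : AntitoneOn (fun s => u s + A * g (w 0) * s) I := by
      apply antitoneOn_of_deriv_nonpos hIconv (hcont _) (hdiff _)
      intro x hx
      rw [hI, interior_Ico] at hx
      have hx' : x ∈ I := Set.Ioo_subset_Ico_self hx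
      rw [(hphi _ x hx').deriv]
      have := hlb x hx'
      nlinarith [hApos]
    have hkey : ∀ t ∈ I, A * g (w 0) * t < 1 := by
      intro t ht
      have h1 := hanti h0I ht ht.1
      simp only [mul_zero, add_zero, hu0] at h1
      have := hupos t ht
      linarith
    by_contra hcon
    push_neg at hcon
    have hBpos : 0 < A * g (w 0) := mul_pos hApos hg0
    have htI : 1 / (A * g (w 0)) ∈ I := by
      constructor
      · positivity
      · exact hcon
    have := hkey _ htI
    rw [mul_one_div, div_self hBpos.ne'] at this
    exact lt_irrefl 1 this
end

section
/- Along the gradient flow ẇ = ∇g(w) of a differentiable function g: ℝ^d → ℝ, the quantity g(w(t)/‖w(t)‖^L) is nondecreasing when g is L-homogeneous. More precisely, if g is L-positively homogeneous and differentiable, and w(t) solves ẇ = ∇g(w) with w(t) ≠ 0, then d/dt [ g(w(t)) / ‖w(t)‖^L ] = ⟨∇g(w), (I − wwᵀ/‖w‖²) ∇g(w)⟩ / ‖w‖^L ≥ 0. -/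
/-- Along the gradient flow `ẇ = ∇g(w)` of a differentiable `L`-homogeneous `g`,
the normalized value `g(w)/‖w‖^L` is nondecreasing: its derivative equals
`⟨∇g(w), (I - wwᵀ/‖w‖²)∇g(w)⟩ / ‖w‖^L`, which is nonnegative. -/
theorem normalized_value_nondecreasing {d : ℕ} (L : ℝ) (hL : 0 < L)
    (g : EuclideanSpace ℝ (Fin d) → ℝ) (hg : Differentiable ℝ g)
    (hhom : ∀ c : ℝ, 0 ≤ c → ∀ x : EuclideanSpace ℝ (Fin d),
      g (c • x) = c ^ L * g x)
    (w : ℝ → EuclideanSpace ℝ (Fin d))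
    (hflow : ∀ s : ℝ, HasDerivAt w (gradient g (w s)) s)
    (hne : ∀ s : ℝ, w s ≠ 0) (t : ℝ) :
    HasDerivAt (fun s => g (w s) / ‖w s‖ ^ L)
      ((inner ℝ (gradient g (w t))
          (gradient g (w t)
            - (((inner ℝ (w t) (gradient g (w t)) : ℝ) / ‖w t‖ ^ 2) • w t)) : ℝ)
        / ‖w t‖ ^ L) t ∧
    0 ≤ ((inner ℝ (gradient g (w t))
          (gradient g (w t)
            - (((inner ℝ (w t) (gradient g (w t)) : ℝ) / ‖w t‖ ^ 2) • w t)) : ℝ)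
        / ‖w t‖ ^ L) := by
  set x := w t with hx
  set v := gradient g (w t) with hv
  set a : ℝ := inner ℝ x v with ha
  set vv : ℝ := inner ℝ v v with hvv
  have hrpos : (0:ℝ) < ‖x‖ := norm_pos_iff.mpr (hne t)
  have hn2pos : (0:ℝ) < ‖x‖ ^ 2 := by positivity
  have hrLpos : (0:ℝ) < ‖x‖ ^ L := Real.rpow_pos_of_pos hrpos L
  -- Euler identity : a = L * g x
  have heuler : a = L * g x := by
    have h1 : HasDerivAt (fun c : ℝ => g (c • x)) (inner ℝ v x : ℝ) 1 := by
      have hsmul : HasDerivAt (fun c : ℝ => c • x) x 1 := by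
        simpa using (hasDerivAt_id (1:ℝ)).smul_const x
      have hgx : HasGradientAt g v ((1:ℝ) • x) := by
        rw [one_smul]
        exact (hg x).hasGradientAt
      have := hgx.hasFDerivAt.comp_hasDerivAt 1 hsmul
      exact this
    have h2 : HasDerivAt (fun c : ℝ => c ^ L * g x) (L * g x) 1 := by
      have := (Real.hasDerivAt_rpow_const (x := (1:ℝ)) (p := L)
        (Or.inl one_ne_zero)).mul_const (g x)
      simpa using this
    have hev : (fun c : ℝ => g (c • x)) =ᶠ[nhds (1:ℝ)] fun c => c ^ L * g x := by
      filter_upwards [eventually_gt_nhds (show (0:ℝ) < 1 by norm_num)] with c hc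
      exact hhom c hc.le x
    have h2' : HasDerivAt (fun c : ℝ => g (c • x)) (L * g x) 1 :=
      h2.congr_of_eventuallyEq hev
    have := h1.unique h2'
    rw [ha, real_inner_comm]
    exact this
  -- derivative of the numerator
  have hG : HasDerivAt (fun s => g (w s)) vv t := by
    have := ((hg x).hasGradientAt.hasFDerivAt).comp_hasDerivAt t (hflow t)
    exact this
  -- derivative of ‖w s‖² and of (‖w s‖²)^(L/2)
  have hN : HasDerivAt (fun s => ‖w s‖ ^ 2 : ℝ → ℝ) (2 * a) t := by
    exact (hflow t).norm_sq
  have hD : HasDerivAt (fun s => (‖w s‖ ^ 2 : ℝ) ^ (L / 2))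
      (L / 2 * (‖x‖ ^ 2 : ℝ) ^ (L / 2 - 1) * (2 * a)) t := by
    have := hN.rpow_const (p := L / 2) (Or.inl hn2pos.ne')
    convert this using 1
    ring
  -- key rpow identities
  have key : ∀ s : ℝ, ((‖w s‖ : ℝ) ^ 2) ^ (L / 2) = ‖w s‖ ^ L := by
    intro s
    rw [← Real.rpow_natCast (‖w s‖) 2, ← Real.rpow_mul (norm_nonneg _)]
    congr 1
    push_cast
    ring
  have key2 : ((‖x‖ : ℝ) ^ 2) ^ (L / 2 - 1) = ‖x‖ ^ L / ‖x‖ ^ 2 := by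
    rw [← Real.rpow_natCast (‖x‖) 2, ← Real.rpow_mul (norm_nonneg _),
      ← Real.rpow_sub hrpos]
    congr 1
    push_cast
    ring
  -- quotient rule
  have hQ : HasDerivAt (fun s => g (w s) / ((‖w s‖ ^ 2 : ℝ) ^ (L / 2)))
      ((vv * ((‖x‖ ^ 2 : ℝ) ^ (L / 2))
        - g x * (L / 2 * (‖x‖ ^ 2 : ℝ) ^ (L / 2 - 1) * (2 * a)))
        / ((‖x‖ ^ 2 : ℝ) ^ (L / 2)) ^ 2) t := by
    have hDne : ((‖x‖ ^ 2 : ℝ) ^ (L / 2)) ≠ 0 := by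
      rw [key t]; exact hrLpos.ne'
    exact hG.div hD hDne
  -- identify functions and derivative values
  have hfun : (fun s => g (w s) / ((‖w s‖ ^ 2 : ℝ) ^ (L / 2)))
      = fun s => g (w s) / ‖w s‖ ^ L := by
    funext s; rw [key s]
  have hinner : (inner ℝ v (v - ((a / ‖x‖ ^ 2) • x)) : ℝ) = vv - a * a / ‖x‖ ^ 2 := by
    have hvx : (inner ℝ v x : ℝ) = a := by rw [ha]; exact real_inner_comm x v
    rw [inner_sub_right, real_inner_smul_right, hvx, ← hvv]
    ring
  have hval : (vv * ((‖x‖ ^ 2 : ℝ) ^ (L / 2))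
        - g x * (L / 2 * (‖x‖ ^ 2 : ℝ) ^ (L / 2 - 1) * (2 * a)))
        / ((‖x‖ ^ 2 : ℝ) ^ (L / 2)) ^ 2
      = ((inner ℝ v (v - ((a / ‖x‖ ^ 2) • x)) : ℝ) / ‖x‖ ^ L) := by
    have hgx : g x = a / L := by rw [heuler]; field_simp
    rw [key t, key2, hgx, hinner, ← hx]
    field_simp
  constructor
  · rw [← hval]
    have := hQ
    rwa [hfun] at this
  · apply div_nonneg _ hrLpos.le
    rw [hinner]
    have hcs : a * a ≤ (‖x‖ ^ 2) * vv := by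
      have := real_inner_mul_inner_self_le x v
      rwa [real_inner_self_eq_norm_sq] at this
    have : a * a / ‖x‖ ^ 2 ≤ vv := by
      rw [div_le_iff₀ hn2pos]
      linarith
    linarith
end

section
/- Let σ(x) = max(0, x)². Consider a three-layer network on ℝ^d with H(x; W₁, W₂, W₃) = W₃σ(W₂σ(W₁x)), two training points x₁ = (1/d)·𝟙, y₁ = 1 and x₂ = −(1/d)·𝟙, y₂ = 1 (𝟙 the all-ones vector), and loss L = ½(H(x₁)−y₁)² + ½(H(x₂)−y₂)². Let W̄₁ ∈ ℝ^{d×d} have first row 𝟙ᵀ and other rows zero, W̄₂ ∈ ℝ^{d×d} have (1,1)-entry equal to 1 and other entries zero, and W̄₃ ∈ ℝ^{1×d} = (1, 0, …, 0). Then the residuals satisfy y₁ − H(x₁; W̄₁,W̄₂,W̄₃) = 0 and y₂ − H(x₂; W̄₁,W̄₂,W̄₃) = 1, and (W̄₁, W̄₂, W̄₃) is a stationary point of L (all gradients vanish). -/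
lemma sq_relu_hasDerivAt (x : ℝ) : HasDerivAt (fun y : ℝ => max 0 y ^ 2) (2 * max 0 x) x := by
  rcases lt_trichotomy x 0 with h | h | h
  · have : max (0:ℝ) x = 0 := max_eq_left h.le
    rw [this, mul_zero]
    apply (hasDerivAt_const x (0:ℝ)).congr_of_eventuallyEq
    filter_upwards [Iio_mem_nhds h] with y hy
    simp [max_eq_left (le_of_lt (Set.mem_Iio.mp hy))]
  · subst h
    rw [hasDerivAt_iff_isLittleO]
    simp only [max_self, ne_eq, OfNat.ofNat_ne_zero, not_false_eq_true, zero_pow, mul_zero,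
      zero_mul, smul_zero, sub_zero, smul_eq_mul]
    rw [Asymptotics.isLittleO_iff]
    intro c hc
    filter_upwards [eventually_abs_sub_lt 0 hc] with y hy
    simp only [sub_zero] at hy ⊢
    have h1 : max 0 y ≤ |y| := by
      rcases le_total 0 y with h | h <;>
        simp [abs_of_nonneg, abs_of_nonpos, h, max_eq_left, max_eq_right]
    have habs : |max 0 y ^ 2| = max 0 y ^ 2 := abs_of_nonneg (by positivity)
    rw [Real.norm_eq_abs, Real.norm_eq_abs, habs]
    calc max 0 y ^ 2 ≤ |y| * |y| := by
          rw [pow_two]; exact mul_le_mul h1 h1 (le_max_left _ _) (abs_nonneg _)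
    _ ≤ c * |y| := by nlinarith [abs_nonneg y]
  · have hm : max (0:ℝ) x = x := max_eq_right h.le
    rw [hm]
    have hp : HasDerivAt (fun y : ℝ => y ^ 2) (2 * x) x := by
      simpa using hasDerivAt_pow 2 x
    apply hp.congr_of_eventuallyEq
    filter_upwards [Ioi_mem_nhds h] with y hy
    simp [max_eq_right (le_of_lt (Set.mem_Ioi.mp hy))]

/-- For the three-layer squared-ReLU network with training points `x₁ = 𝟙/d, y₁ = 1`
and `x₂ = -𝟙/d, y₂ = 1`, the point `(W̄₁, W̄₂, W̄₃)` (single active neuron per layer,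
all-ones first row) has residuals `0` at `x₁` and `1` at `x₂`, and is a stationary
point of the loss. -/
theorem squared_relu_saddle (d : ℕ) [NeZero d]
    (σ : ℝ → ℝ) (hσ : ∀ x : ℝ, σ x = (max 0 x) ^ 2)
    (Hf : (Fin d → Fin d → ℝ) → (Fin d → Fin d → ℝ) → (Fin d → ℝ) →
      (Fin d → ℝ) → ℝ)
    (hHf : ∀ W1 W2 W3 x, Hf W1 W2 W3 x
      = ∑ j, W3 j * σ (∑ k, W2 j k * σ (∑ l, W1 k l * x l)))
    (x₁ x₂ : Fin d → ℝ)
    (hx₁ : x₁ = fun _ => 1 / (d : ℝ))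
    (hx₂ : x₂ = fun _ => -(1 / (d : ℝ)))
    (Lf : (Fin d → Fin d → ℝ) × (Fin d → Fin d → ℝ) × (Fin d → ℝ) → ℝ)
    (hLf : ∀ W, Lf W = (1/2) * (Hf W.1 W.2.1 W.2.2 x₁ - 1) ^ 2
      + (1/2) * (Hf W.1 W.2.1 W.2.2 x₂ - 1) ^ 2)
    (W1b W2b : Fin d → Fin d → ℝ) (W3b : Fin d → ℝ)
    (hW1 : W1b = fun i _ => if i = 0 then (1:ℝ) else 0)
    (hW2 : W2b = fun i j => if i = 0 ∧ j = 0 then (1:ℝ) else 0)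
    (hW3 : W3b = fun j => if j = 0 then (1:ℝ) else 0) :
    1 - Hf W1b W2b W3b x₁ = 0 ∧
    1 - Hf W1b W2b W3b x₂ = 1 ∧
    fderiv ℝ Lf (W1b, W2b, W3b) = 0 := by
  have hd : (d:ℝ) ≠ 0 := Nat.cast_ne_zero.mpr (NeZero.ne d)
  have hσ0 : σ 0 = 0 := by simp [hσ]
  have hσ1 : σ 1 = 1 := by simp [hσ]
  have hσfun : σ = fun y : ℝ => max 0 y ^ 2 := funext hσ
  have hσd : ∀ x : ℝ, HasDerivAt σ (2 * max 0 x) x := by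
    rw [hσfun]; exact sq_relu_hasDerivAt
  have hσdiff : Differentiable ℝ σ := fun x => (hσd x).differentiableAt
  -- values
  have hv1 : ∀ k : Fin d, (∑ l, W1b k l * x₁ l) = if k = 0 then 1 else 0 := by
    intro k
    rw [hW1, hx₁]
    simp only [Finset.sum_const, Finset.card_univ, Fintype.card_fin, nsmul_eq_mul]
    split <;> field_simp
  have hv2 : ∀ k : Fin d, (∑ l, W1b k l * x₂ l) = if k = 0 then -1 else 0 := by
    intro k
    rw [hW1, hx₂]
    simp only [Finset.sum_const, Finset.card_univ, Fintype.card_fin, nsmul_eq_mul]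
    split <;> field_simp <;> norm_num
  have hσv2 : ∀ k : Fin d, σ (∑ l, W1b k l * x₂ l) = 0 := by
    intro k
    rw [hv2 k, hσ]
    split <;> norm_num
  have hu1 : ∀ j : Fin d, (∑ k, W2b j k * σ (∑ l, W1b k l * x₁ l)) = if j = 0 then 1 else 0 := by
    intro j
    simp only [hv1]
    rw [hW2, Finset.sum_eq_single 0]
    · simp [hσ1]
    · intro k _ hk; simp [hk, hσ0]
    · simp
  have hu2 : ∀ j : Fin d, (∑ k, W2b j k * σ (∑ l, W1b k l * x₂ l)) = 0 := by
    intro j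
    simp only [hσv2, mul_zero, Finset.sum_const_zero]
  have hH1 : Hf W1b W2b W3b x₁ = 1 := by
    rw [hHf]
    simp only [hu1]
    rw [hW3, Finset.sum_eq_single 0]
    · simp [hσ1]
    · intro k _ hk; simp [hk, hσ0]
    · simp
  have hH2 : Hf W1b W2b W3b x₂ = 0 := by
    rw [hHf]
    simp only [hu2, hσ0, mul_zero, Finset.sum_const_zero]
  refine ⟨by rw [hH1]; ring, by rw [hH2]; ring, ?_⟩
  -- stationarity
  set p : (Fin d → Fin d → ℝ) × (Fin d → Fin d → ℝ) × (Fin d → ℝ) := (W1b, W2b, W3b) with hp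
  -- coordinate maps are differentiable
  have hc1 : ∀ k l : Fin d, DifferentiableAt ℝ
      (fun W : (Fin d → Fin d → ℝ) × (Fin d → Fin d → ℝ) × (Fin d → ℝ) => W.1 k l) p := by
    intro k l; fun_prop
  have hc2 : ∀ j k : Fin d, DifferentiableAt ℝ
      (fun W : (Fin d → Fin d → ℝ) × (Fin d → Fin d → ℝ) × (Fin d → ℝ) => W.2.1 j k) p := by
    intro j k; fun_prop
  have hc3 : ∀ j : Fin d, DifferentiableAt ℝ
      (fun W : (Fin d → Fin d → ℝ) × (Fin d → Fin d → ℝ) × (Fin d → ℝ) => W.2.2 j) p := by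
    intro j; fun_prop
  -- g₁ differentiable at p
  have hg1diff : DifferentiableAt ℝ
      (fun W : (Fin d → Fin d → ℝ) × (Fin d → Fin d → ℝ) × (Fin d → ℝ) =>
        Hf W.1 W.2.1 W.2.2 x₁) p := by
    simp only [hHf]
    fun_prop
  -- inner layer at x₂ has zero derivative
  have hσv2' : ∀ k : Fin d, HasFDerivAt
      (fun W : (Fin d → Fin d → ℝ) × (Fin d → Fin d → ℝ) × (Fin d → ℝ) =>
        σ (∑ l, W.1 k l * x₂ l)) (0 : _ →L[ℝ] ℝ) p := by
    intro k
    have hvdiff : DifferentiableAt ℝ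
        (fun W : (Fin d → Fin d → ℝ) × (Fin d → Fin d → ℝ) × (Fin d → ℝ) =>
          ∑ l, W.1 k l * x₂ l) p :=
      DifferentiableAt.fun_sum fun l _ => (hc1 k l).mul_const (x₂ l)
    have hval : (∑ l, p.1 k l * x₂ l) = if k = 0 then -1 else 0 := hv2 k
    have hderiv0 : (2 : ℝ) * max 0 (∑ l, p.1 k l * x₂ l) = 0 := by
      rw [hval]; split <;> norm_num
    have := (hσd (∑ l, p.1 k l * x₂ l)).comp_hasFDerivAt p hvdiff.hasFDerivAt
    rw [hderiv0] at this
    simpa [Function.comp_def] using this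
  -- second layer at x₂: zero derivative
  have hσu2' : ∀ j : Fin d, HasFDerivAt
      (fun W : (Fin d → Fin d → ℝ) × (Fin d → Fin d → ℝ) × (Fin d → ℝ) =>
        σ (∑ k, W.2.1 j k * σ (∑ l, W.1 k l * x₂ l))) (0 : _ →L[ℝ] ℝ) p := by
    intro j
    have husum : HasFDerivAt
        (fun W : (Fin d → Fin d → ℝ) × (Fin d → Fin d → ℝ) × (Fin d → ℝ) =>
          ∑ k, W.2.1 j k * σ (∑ l, W.1 k l * x₂ l)) (0 : _ →L[ℝ] ℝ) p := by
      have : HasFDerivAt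
          (fun W : (Fin d → Fin d → ℝ) × (Fin d → Fin d → ℝ) × (Fin d → ℝ) =>
            ∑ k, W.2.1 j k * σ (∑ l, W.1 k l * x₂ l))
          (∑ k : Fin d, (0 : _ →L[ℝ] ℝ)) p := by
        apply HasFDerivAt.fun_sum
        intro k _
        have hmul := ((hc2 j k).hasFDerivAt).fun_mul (hσv2' k)
        simpa [hσv2 k, hp] using hmul
      simpa using this
    have := (hσd (∑ k, p.2.1 j k * σ (∑ l, p.1 k l * x₂ l))).comp_hasFDerivAt p husum
    simpa [Function.comp_def] using this
  -- g₂ has zero derivative at p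
  have hg2 : HasFDerivAt
      (fun W : (Fin d → Fin d → ℝ) × (Fin d → Fin d → ℝ) × (Fin d → ℝ) =>
        Hf W.1 W.2.1 W.2.2 x₂) (0 : _ →L[ℝ] ℝ) p := by
    simp only [hHf]
    have : HasFDerivAt
        (fun W : (Fin d → Fin d → ℝ) × (Fin d → Fin d → ℝ) × (Fin d → ℝ) =>
          ∑ j, W.2.2 j * σ (∑ k, W.2.1 j k * σ (∑ l, W.1 k l * x₂ l)))
        (∑ j : Fin d, (0 : _ →L[ℝ] ℝ)) p := by
      apply HasFDerivAt.fun_sum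
      intro j _
      have hval : σ (∑ k, p.2.1 j k * σ (∑ l, p.1 k l * x₂ l)) = 0 := by
        rw [hu2 j, hσ0]
      have hmul := ((hc3 j).hasFDerivAt).fun_mul (hσu2' j)
      simpa [hval] using hmul
    simpa using this
  -- outer square function
  have houter : ∀ t : ℝ, HasDerivAt (fun s : ℝ => (1/2) * (s - 1) ^ 2) (t - 1) t := by
    intro t
    have := (((hasDerivAt_id t).sub_const 1).pow 2).const_mul (1/2 : ℝ)
    refine this.congr_deriv ?_
    simp only [id_eq]
    ring
  have hf1 : HasFDerivAt
      (fun W : (Fin d → Fin d → ℝ) × (Fin d → Fin d → ℝ) × (Fin d → ℝ) =>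
        (1/2) * (Hf W.1 W.2.1 W.2.2 x₁ - 1) ^ 2) (0 : _ →L[ℝ] ℝ) p := by
    have := (houter (Hf p.1 p.2.1 p.2.2 x₁)).comp_hasFDerivAt p hg1diff.hasFDerivAt
    have hz : Hf p.1 p.2.1 p.2.2 x₁ - 1 = 0 := by rw [hp]; simpa using sub_eq_zero_of_eq hH1
    rw [hz] at this
    simpa [Function.comp_def] using this
  have hf2 : HasFDerivAt
      (fun W : (Fin d → Fin d → ℝ) × (Fin d → Fin d → ℝ) × (Fin d → ℝ) =>
        (1/2) * (Hf W.1 W.2.1 W.2.2 x₂ - 1) ^ 2) (0 : _ →L[ℝ] ℝ) p := by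
    have := (houter (Hf p.1 p.2.1 p.2.2 x₂)).comp_hasFDerivAt p hg2
    simpa [Function.comp_def] using this
  have hL : HasFDerivAt Lf (0 : _ →L[ℝ] ℝ) p := by
    have hLeq : Lf = fun W => (1/2) * (Hf W.1 W.2.1 W.2.2 x₁ - 1) ^ 2
        + (1/2) * (Hf W.1 W.2.1 W.2.2 x₂ - 1) ^ 2 := funext hLf
    rw [hLeq]
    simpa using hf1.fun_add hf2
  exact hL.fderiv
end
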